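/- Let ρ be a density matrix on a finite-dimensional complex space and O a matrix of the same size. Then the one-point Rényi-1 correlator R := tr(√ρ · O · √ρ · O†) is a nonnegative real number and satisfies the two-sided bound F(ρ, O ρ O†)² ≤ R ≤ ‖O‖∞ · F(ρ, O ρ O†). -/

import Mathlib

set_option linter.unusedSectionVars false
set_option linter.unusedVariables false
set_option maxHeartbeats 1600000


noncomputable section

open scoped Matrix Kronecker ComplexOrder

/-- The positive semidefinite square root of a matrix (defaults to `0` if not PSD). -/
noncomputable def matSqrt {n : Type*} [Fintype n] [DecidableEq n] (M : Matrix n n ℂ) :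
    Matrix n n ℂ :=
  open scoped Classical in
  if h : M.PosSemidef then
    (h.isHermitian.eigenvectorUnitary : Matrix n n ℂ) *
      Matrix.diagonal (((↑) : ℝ → ℂ) ∘ Real.sqrt ∘ h.isHermitian.eigenvalues) *
      (star h.isHermitian.eigenvectorUnitary : Matrix n n ℂ)
  else 0

/-- The fidelity `F(ρ, σ) = tr √(√ρ σ √ρ)` of two PSD matrices. -/
noncomputable def fidelity {n : Type*} [Fintype n] [DecidableEq n] (ρ σ : Matrix n n ℂ) : ℝ :=
  (matSqrt (matSqrt ρ * σ * matSqrt ρ)).trace.re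

/-- The ℓ²→ℓ² operator norm of a complex matrix. -/
noncomputable def opNorm {m n : Type*} [Fintype m] [Fintype n] [DecidableEq n]
    (M : Matrix m n ℂ) : ℝ :=
  ‖(Matrix.toEuclideanLin.trans LinearMap.toContinuousLinearMap) M‖

/-- Partial trace over the second tensor factor. -/
noncomputable def ptraceB {A B : Type*} [Fintype B]
    (ρ : Matrix (A × B) (A × B) ℂ) : Matrix A A ℂ :=
  Matrix.of fun a a' => ∑ b : B, ρ (a, b) (a', b)

namespace Matrix.PosSemidef

open scoped MatrixOrder

variable {n : Type*} [Fintype n] [DecidableEq n] {A : Matrix n n ℂ}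

def sqrt (hA : A.PosSemidef) : Matrix n n ℂ :=
  (hA.isHermitian.eigenvectorUnitary : Matrix n n ℂ) *
    Matrix.diagonal (((↑) : ℝ → ℂ) ∘ Real.sqrt ∘ hA.isHermitian.eigenvalues) *
    (star hA.isHermitian.eigenvectorUnitary : Matrix n n ℂ)

lemma sqrt_eq_cfcSqrt (hA : A.PosSemidef) : hA.sqrt = CFC.sqrt A := by
  rw [CFC.sqrt_eq_real_sqrt A hA.nonneg, cfcₙ_eq_cfc, hA.1.cfc_eq]
  simp [Matrix.IsHermitian.cfc, sqrt]

lemma posSemidef_sqrt (hA : A.PosSemidef) : hA.sqrt.PosSemidef := by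
  rw [sqrt_eq_cfcSqrt]; exact Matrix.nonneg_iff_posSemidef.mp (CFC.sqrt_nonneg A)

lemma sqrt_mul_self (hA : A.PosSemidef) : hA.sqrt * hA.sqrt = A := by
  rw [sqrt_eq_cfcSqrt]; exact CFC.sqrt_mul_sqrt_self A hA.nonneg

lemma eq_sqrt_of_sq_eq (hA : A.PosSemidef) {B : Matrix n n ℂ} (hB : B.PosSemidef)
    (hAB : A ^ 2 = B) : A = hB.sqrt := by
  rw [sqrt_eq_cfcSqrt]
  exact (CFC.sqrt_unique (by rw [← sq]; exact hAB) hA.nonneg).symm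

end Matrix.PosSemidef

namespace RenyiAux

open Matrix Complex
open scoped ComplexOrder
variable {n : Type*} [Fintype n] [DecidableEq n]

lemma trace_conjTranspose_mul (A B : Matrix n n ℂ) :
    (Aᴴ * B).trace = ∑ p : n × n, (starRingEnd ℂ) (A p.1 p.2) * B p.1 p.2 := by
  rw [Matrix.trace, Fintype.sum_prod_type]
  simp only [Matrix.diag_apply, Matrix.mul_apply, Matrix.conjTranspose_apply]
  rw [Finset.sum_comm]
  rfl

lemma trace_conjTranspose_mul_self (A : Matrix n n ℂ) :
    (Aᴴ * A).trace = ((∑ p : n × n, ‖A p.1 p.2‖ ^ 2 : ℝ) : ℂ) := by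
  rw [trace_conjTranspose_mul, Complex.ofReal_sum]
  refine Finset.sum_congr rfl fun p _ => ?_
  simp [← Complex.normSq_eq_conj_mul_self, Complex.normSq_eq_norm_sq]

lemma trace_conjTranspose_mul_self_re (A : Matrix n n ℂ) :
    (Aᴴ * A).trace.re = ∑ p : n × n, ‖A p.1 p.2‖ ^ 2 := by
  rw [trace_conjTranspose_mul_self]; exact Complex.ofReal_re _

lemma trace_conjTranspose_mul_self_re_nonneg (A : Matrix n n ℂ) :
    0 ≤ (Aᴴ * A).trace.re := by
  rw [trace_conjTranspose_mul_self_re]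
  exact Finset.sum_nonneg fun p _ => sq_nonneg _

/-- Cauchy–Schwarz for the Frobenius inner product. -/
lemma cs (A B : Matrix n n ℂ) :
    ‖(Aᴴ * B).trace‖ ^ 2 ≤ (Aᴴ * A).trace.re * (Bᴴ * B).trace.re := by
  let a : EuclideanSpace ℂ (n × n) := WithLp.toLp 2 (fun p : n × n => A p.1 p.2)
  let b : EuclideanSpace ℂ (n × n) := WithLp.toLp 2 (fun p : n × n => B p.1 p.2)
  have hinner : (Aᴴ * B).trace = inner (𝕜 := ℂ) a b := by
    rw [trace_conjTranspose_mul, PiLp.inner_apply]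
    refine Finset.sum_congr rfl fun p _ => ?_
    simp [a, b, RCLike.inner_apply, mul_comm]
  have hA : (Aᴴ * A).trace.re = ‖a‖ ^ 2 := by
    rw [trace_conjTranspose_mul_self_re, EuclideanSpace.norm_eq,
      Real.sq_sqrt (Finset.sum_nonneg fun p _ => sq_nonneg _)]
  have hB : (Bᴴ * B).trace.re = ‖b‖ ^ 2 := by
    rw [trace_conjTranspose_mul_self_re, EuclideanSpace.norm_eq,
      Real.sq_sqrt (Finset.sum_nonneg fun p _ => sq_nonneg _)]
  rw [hinner, hA, hB, ← mul_pow]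
  exact pow_le_pow_left₀ (norm_nonneg _) (norm_inner_le_norm a b) 2

/-- trace of a PSD matrix is a nonneg real. -/
lemma PosSemidef.trace_eq_re {W : Matrix n n ℂ} (hW : W.PosSemidef) :
    W.trace = (W.trace.re : ℂ) ∧ 0 ≤ W.trace.re := by
  have h : ∃ B : Matrix n n ℂ, W = Bᴴ * B :=
    ⟨hW.sqrt, by rw [hW.posSemidef_sqrt.1.eq, hW.sqrt_mul_self]⟩
  obtain ⟨B, rfl⟩ := h
  rw [trace_conjTranspose_mul_self, Complex.ofReal_re]
  exact ⟨rfl, by positivity⟩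

/-- trace of product of PSD matrices has nonneg real part. -/
lemma trace_mul_re_nonneg {A B : Matrix n n ℂ} (hA : A.PosSemidef) (hB : B.PosSemidef) :
    0 ≤ (A * B).trace.re := by
  have h1 : ((hA.sqrt)ᴴ * (B * hA.sqrt)).trace = (A * B).trace := by
    calc ((hA.sqrt)ᴴ * (B * hA.sqrt)).trace = ((B * hA.sqrt) * hA.sqrt).trace := by
          rw [hA.posSemidef_sqrt.1.eq, Matrix.trace_mul_comm]
      _ = (B * (hA.sqrt * hA.sqrt)).trace := by rw [Matrix.mul_assoc]
      _ = (B * A).trace := by rw [hA.sqrt_mul_self]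
      _ = (A * B).trace := Matrix.trace_mul_comm _ _
  have h2 : (hB.sqrt * hA.sqrt)ᴴ * (hB.sqrt * hA.sqrt) = (hA.sqrt)ᴴ * (B * hA.sqrt) := by
    rw [Matrix.conjTranspose_mul, hB.posSemidef_sqrt.1.eq, Matrix.mul_assoc,
      ← Matrix.mul_assoc hB.sqrt, hB.sqrt_mul_self]
  rw [← h1, ← h2]
  exact trace_conjTranspose_mul_self_re_nonneg _




lemma mulVec_norm_le (O : Matrix n n ℂ) (v : n → ℂ) :
    ∑ i, ‖(O *ᵥ v) i‖ ^ 2 ≤ opNorm O ^ 2 * ∑ i, ‖v i‖ ^ 2 := by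
  set f := (Matrix.toEuclideanLin.trans LinearMap.toContinuousLinearMap) O with hf
  set x : EuclideanSpace ℂ n := (WithLp.equiv 2 (n → ℂ)).symm v with hx
  have happ : f x = (WithLp.equiv 2 (n → ℂ)).symm (O *ᵥ v) := rfl
  have hle : ‖f x‖ ≤ opNorm O * ‖x‖ := f.le_opNorm x
  have h1 : ‖f x‖ ^ 2 = ∑ i, ‖(O *ᵥ v) i‖ ^ 2 := by
    rw [happ, EuclideanSpace.norm_eq, Real.sq_sqrt (by positivity)]
    rfl
  have h2 : ‖x‖ ^ 2 = ∑ i, ‖v i‖ ^ 2 := by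
    rw [EuclideanSpace.norm_eq, Real.sq_sqrt (by positivity)]
    rfl
  calc ∑ i, ‖(O *ᵥ v) i‖ ^ 2 = ‖f x‖ ^ 2 := h1.symm
    _ ≤ (opNorm O * ‖x‖) ^ 2 := by
        apply pow_le_pow_left₀ (norm_nonneg _) hle
    _ = opNorm O ^ 2 * ∑ i, ‖v i‖ ^ 2 := by rw [mul_pow, h2]

/-- For any `A`, `tr(A Oᴴ O Aᴴ) ≤ ‖O‖² tr(A Aᴴ)`. -/
lemma trace_opNorm_bound (O A : Matrix n n ℂ) :
    (A * (Oᴴ * O) * Aᴴ).trace.re ≤ opNorm O ^ 2 * (A * Aᴴ).trace.re := by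
  have h1 : A * (Oᴴ * O) * Aᴴ = (O * Aᴴ)ᴴ * (O * Aᴴ) := by
    rw [Matrix.conjTranspose_mul, Matrix.conjTranspose_conjTranspose]
    noncomm_ring
  have h2 : A * Aᴴ = (Aᴴ)ᴴ * Aᴴ := by rw [Matrix.conjTranspose_conjTranspose]
  rw [h1, h2, trace_conjTranspose_mul_self_re, trace_conjTranspose_mul_self_re]
  have key : ∀ j : n, ∑ i, ‖(O * Aᴴ) i j‖ ^ 2 ≤ opNorm O ^ 2 * ∑ i, ‖Aᴴ i j‖ ^ 2 := by
    intro j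
    have hcol : ∀ i, (O * Aᴴ) i j = (O *ᵥ fun k => Aᴴ k j) i := by
      intro i; rw [Matrix.mul_apply, Matrix.mulVec, dotProduct]
    calc ∑ i, ‖(O * Aᴴ) i j‖ ^ 2 = ∑ i, ‖(O *ᵥ fun k => Aᴴ k j) i‖ ^ 2 := by
          refine Finset.sum_congr rfl fun i _ => by rw [hcol]
      _ ≤ opNorm O ^ 2 * ∑ i, ‖Aᴴ i j‖ ^ 2 := mulVec_norm_le O _
  calc ∑ p : n × n, ‖(O * Aᴴ) p.1 p.2‖ ^ 2 = ∑ j : n, ∑ i : n, ‖(O * Aᴴ) i j‖ ^ 2 := by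
        rw [Fintype.sum_prod_type, Finset.sum_comm]
    _ ≤ ∑ j : n, opNorm O ^ 2 * ∑ i : n, ‖Aᴴ i j‖ ^ 2 := Finset.sum_le_sum fun j _ => key j
    _ = opNorm O ^ 2 * ∑ j : n, ∑ i : n, ‖Aᴴ i j‖ ^ 2 := by rw [Finset.mul_sum]
    _ = opNorm O ^ 2 * ∑ p : n × n, ‖Aᴴ p.1 p.2‖ ^ 2 := by
        rw [Fintype.sum_prod_type, Finset.sum_comm]

variable (M : Matrix n n ℂ)



def HH : Matrix n n ℂ := M * Mᴴ
lemma hHH : (HH M).PosSemidef := Matrix.posSemidef_self_mul_conjTranspose M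
def dd (i : n) : ℝ := (hHH M).1.eigenvalues i
def uu : Matrix n n ℂ := (hHH M).1.eigenvectorUnitary
def Φ (f : ℝ → ℝ) : Matrix n n ℂ :=
  uu M * Matrix.diagonal (fun i => (f (dd M i) : ℂ)) * (uu M)ᴴ

lemma dd_nonneg (i : n) : 0 ≤ dd M i := (hHH M).eigenvalues_nonneg i

lemma uu_mul : uu M * (uu M)ᴴ = 1 := by
  have := (hHH M).1.eigenvectorUnitary.2
  rw [Unitary.mem_iff] at this
  simpa [uu, Matrix.star_eq_conjTranspose] using this.2

lemma uu_mul' : (uu M)ᴴ * uu M = 1 := by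
  have := (hHH M).1.eigenvectorUnitary.2
  rw [Unitary.mem_iff] at this
  simpa [uu, Matrix.star_eq_conjTranspose] using this.1

lemma diag_congr (v w : n → ℂ) (h : ∀ i, v i = w i) :
    Matrix.diagonal v = Matrix.diagonal w := by
  rw [funext h]

lemma Phi_mul (f g : ℝ → ℝ) : Φ M f * Φ M g = Φ M (fun x => f x * g x) := by
  unfold Φ
  have hc : ∀ X : Matrix n n ℂ, (uu M)ᴴ * (uu M * X) = X := by
    intro X; rw [← Matrix.mul_assoc, uu_mul', Matrix.one_mul]
  simp only [Matrix.mul_assoc]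
  rw [hc, ← Matrix.mul_assoc (Matrix.diagonal _), Matrix.diagonal_mul_diagonal]
  congr 2
  exact diag_congr _ _ fun i => by push_cast; ring

lemma Phi_add (f g : ℝ → ℝ) : Φ M f + Φ M g = Φ M (fun x => f x + g x) := by
  unfold Φ
  rw [← Matrix.add_mul, ← Matrix.mul_add, Matrix.diagonal_add]
  congr 2
  exact diag_congr _ _ fun i => by push_cast; ring

lemma Phi_congr {f g : ℝ → ℝ} (h : ∀ i, f (dd M i) = g (dd M i)) : Φ M f = Φ M g := by
  unfold Φ
  congr 2
  exact diag_congr _ _ fun i => by rw [h i]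

lemma Phi_herm (f : ℝ → ℝ) : (Φ M f)ᴴ = Φ M f := by
  unfold Φ
  rw [Matrix.conjTranspose_mul, Matrix.conjTranspose_mul, Matrix.conjTranspose_conjTranspose,
    Matrix.diagonal_conjTranspose, Matrix.mul_assoc]
  congr 2
  refine diag_congr _ _ fun i => ?_
  simp

lemma Phi_one : Φ M (fun _ => 1) = 1 := by
  unfold Φ
  rw [show Matrix.diagonal (fun i : n => ((1 : ℝ) : ℂ)) = 1 by push_cast; exact Matrix.diagonal_one,
    Matrix.mul_one, uu_mul]

lemma Phi_zero : Φ M (fun _ => 0) = 0 := by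
  unfold Φ
  rw [show Matrix.diagonal (fun i : n => ((0 : ℝ) : ℂ)) = 0 by push_cast; exact Matrix.diagonal_zero,
    Matrix.mul_zero, Matrix.zero_mul]

lemma Phi_posSemidef {f : ℝ → ℝ} (h : ∀ i, 0 ≤ f (dd M i)) : (Φ M f).PosSemidef := by
  have key : Φ M f = (uu M * Matrix.diagonal fun i => (Real.sqrt (f (dd M i)) : ℂ)) *
      (uu M * Matrix.diagonal fun i => (Real.sqrt (f (dd M i)) : ℂ))ᴴ := by
    rw [Matrix.conjTranspose_mul, Matrix.diagonal_conjTranspose, ← Matrix.mul_assoc,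
      Matrix.mul_assoc (uu M), Matrix.diagonal_mul_diagonal]
    unfold Φ
    congr 2
    refine diag_congr _ _ fun i => ?_
    simp only [Pi.star_apply, Complex.star_def, Complex.conj_ofReal, ← Complex.ofReal_mul,
      Real.mul_self_sqrt (h i)]
  rw [key]
  exact Matrix.posSemidef_self_mul_conjTranspose _

lemma Phi_trace (f : ℝ → ℝ) : (Φ M f).trace = ((∑ i, f (dd M i) : ℝ) : ℂ) := by
  unfold Φ
  rw [Matrix.trace_mul_cycle, uu_mul', Matrix.one_mul, Matrix.trace_diagonal]
  push_cast
  rfl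

lemma Phi_id : Φ M (fun x => x) = HH M := by
  have := (hHH M).1.spectral_theorem
  simp only [Unitary.conjStarAlgAut_apply, Unitary.coe_star, Matrix.star_eq_conjTranspose] at this
  exact this.symm

-- === derived operators ===
def ggf : ℝ → ℝ := fun x => if 0 < x then (Real.sqrt x)⁻¹ else 0
def eef : ℝ → ℝ := fun x => if 0 < x then 1 else 0

def PP : Matrix n n ℂ := Φ M Real.sqrt
def QQ : Matrix n n ℂ := Φ M fun x => Real.sqrt (Real.sqrt x)
def VV : Matrix n n ℂ := Φ M ggf * M

lemma PP_sq : PP M * PP M = HH M := by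
  rw [PP, Phi_mul, ← Phi_id]
  refine Phi_congr M fun i => ?_
  exact Real.mul_self_sqrt (dd_nonneg M i)

lemma PP_psd : (PP M).PosSemidef := Phi_posSemidef M fun i => Real.sqrt_nonneg _

lemma QQ_sq : QQ M * QQ M = PP M := by
  rw [QQ, Phi_mul, PP]
  refine Phi_congr M fun i => ?_
  exact Real.mul_self_sqrt (Real.sqrt_nonneg _)

lemma QQ_herm : (QQ M)ᴴ = QQ M := Phi_herm M _

lemma PP_eq_sqrt : PP M = (hHH M).sqrt :=
  (PP_psd M).eq_sqrt_of_sq_eq (hHH M) (by rw [pow_two, PP_sq])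

lemma eef_cases (i : n) : eef (dd M i) = 1 ∧ 0 < dd M i ∨ eef (dd M i) = 0 ∧ dd M i = 0 := by
  rcases (dd_nonneg M i).lt_or_eq with h | h
  · exact Or.inl ⟨if_pos h, h⟩
  · exact Or.inr ⟨if_neg (by rw [← h]; exact lt_irrefl 0), h.symm⟩

lemma phiE_mul_M : Φ M eef * M = M := by
  have hzero : Φ M (fun x => 1 - eef x) * M = 0 := by
    rw [← Matrix.self_mul_conjTranspose_eq_zero]
    have hherm := Phi_herm M (fun x => 1 - eef x)
    calc Φ M (fun x => 1 - eef x) * M * (Φ M (fun x => 1 - eef x) * M)ᴴ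
        = Φ M (fun x => 1 - eef x) * (M * Mᴴ) * (Φ M (fun x => 1 - eef x)) := by
          rw [Matrix.conjTranspose_mul, hherm]; noncomm_ring
      _ = Φ M (fun x => 1 - eef x) * Φ M (fun x => x) * Φ M (fun x => 1 - eef x) := by
          rw [Phi_id, HH]
      _ = Φ M (fun x => (1 - eef x) * x * (1 - eef x)) := by
          rw [Phi_mul, Phi_mul]
      _ = Φ M (fun _ => 0) := by
          refine Phi_congr M fun i => ?_
          rcases (dd_nonneg M i).lt_or_eq with h | h
          · simp [eef, if_pos h]
          · simp [eef, ← h]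
      _ = 0 := Phi_zero M
  have hsum : Φ M eef + Φ M (fun x => 1 - eef x) = 1 := by
    rw [Phi_add, ← Phi_one M]
    exact Phi_congr M fun i => by ring
  calc Φ M eef * M = Φ M eef * M + Φ M (fun x => 1 - eef x) * M := by rw [hzero, add_zero]
    _ = (Φ M eef + Φ M (fun x => 1 - eef x)) * M := by rw [Matrix.add_mul]
    _ = M := by rw [hsum, Matrix.one_mul]

lemma PV_eq_M : PP M * VV M = M := by
  rw [PP, VV, ← Matrix.mul_assoc, Phi_mul]
  have : Φ M (fun x => Real.sqrt x * ggf x) = Φ M eef := by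
    refine Phi_congr M fun i => ?_
    rcases (dd_nonneg M i).lt_or_eq with h | h
    · simp only [ggf, eef, if_pos h]
      rw [mul_inv_cancel₀ (ne_of_gt (Real.sqrt_pos.mpr h))]
    · simp [ggf, eef, ← h]
  rw [this, phiE_mul_M]

lemma VV_conjTranspose : (VV M)ᴴ = Mᴴ * Φ M ggf := by
  rw [VV, Matrix.conjTranspose_mul, Phi_herm]

lemma VV_mul_conjTranspose : VV M * (VV M)ᴴ = Φ M eef := by
  rw [VV_conjTranspose, VV]
  calc Φ M ggf * M * (Mᴴ * Φ M ggf) = Φ M ggf * (M * Mᴴ) * Φ M ggf := by noncomm_ring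
    _ = Φ M ggf * Φ M (fun x => x) * Φ M ggf := by rw [Phi_id, HH]
    _ = Φ M (fun x => ggf x * x * ggf x) := by rw [Phi_mul, Phi_mul]
    _ = Φ M eef := by
        refine Phi_congr M fun i => ?_
        rcases (dd_nonneg M i).lt_or_eq with h | h
        · have hs : 0 < Real.sqrt (dd M i) := Real.sqrt_pos.mpr h
          have hd : dd M i = Real.sqrt (dd M i) * Real.sqrt (dd M i) :=
            (Real.mul_self_sqrt (dd_nonneg M i)).symm
          simp only [ggf, eef, if_pos h]
          rw [hd]; field_simp
          rw [Real.sqrt_sq hs.le]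
        · simp [ggf, eef, ← h]

lemma KK_eq : (VV M)ᴴ * VV M = Mᴴ * Φ M (fun x => ggf x * ggf x) * M := by
  rw [VV_conjTranspose, VV, ← Phi_mul]
  noncomm_ring

lemma KK_idem : ((VV M)ᴴ * VV M) * ((VV M)ᴴ * VV M) = (VV M)ᴴ * VV M := by
  rw [KK_eq]
  calc Mᴴ * Φ M (fun x => ggf x * ggf x) * M * (Mᴴ * Φ M (fun x => ggf x * ggf x) * M)
      = Mᴴ * (Φ M (fun x => ggf x * ggf x) * (M * Mᴴ) * Φ M (fun x => ggf x * ggf x)) * M := by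
        noncomm_ring
    _ = Mᴴ * (Φ M (fun x => ggf x * ggf x) * Φ M (fun x => x) *
          Φ M (fun x => ggf x * ggf x)) * M := by rw [Phi_id, HH]
    _ = Mᴴ * Φ M (fun x => ggf x * ggf x) * M := by
        have hmid : Φ M (fun x => ggf x * ggf x) * Φ M (fun x => x) *
            Φ M (fun x => ggf x * ggf x) = Φ M (fun x => ggf x * ggf x) := by
          rw [Phi_mul, Phi_mul]
          refine Phi_congr M fun i => ?_
          rcases (dd_nonneg M i).lt_or_eq with h | h
          · have hs : 0 < Real.sqrt (dd M i) := Real.sqrt_pos.mpr h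
            have hd : dd M i = Real.sqrt (dd M i) * Real.sqrt (dd M i) :=
              (Real.mul_self_sqrt (dd_nonneg M i)).symm
            simp only [ggf, if_pos h]
            rw [hd]; field_simp
            rw [Real.sqrt_sq hs.le]
          · simp [ggf, ← h]
        rw [hmid]

lemma Phi_eef_compl : Φ M eef + Φ M (fun x => 1 - eef x) = 1 := by
  rw [Phi_add, ← Phi_one M]
  exact Phi_congr M fun i => by ring

lemma Phi_one_sub_eef_psd : (Φ M (fun x => 1 - eef x)).PosSemidef := by
  refine Phi_posSemidef M fun i => ?_
  rcases (dd_nonneg M i).lt_or_eq with h | h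
  · simp [eef, if_pos h]
  · simp [eef, ← h]

lemma Phi_eef_psd : (Φ M eef).PosSemidef := by
  refine Phi_posSemidef M fun i => ?_
  rcases (dd_nonneg M i).lt_or_eq with h | h
  · simp [eef, if_pos h]
  · simp [eef, ← h]

lemma trace_VVH_M : ((VV M)ᴴ * M).trace = ((∑ i, Real.sqrt (dd M i) : ℝ) : ℂ) := by
  rw [VV_conjTranspose, Matrix.mul_assoc, Matrix.trace_mul_comm, Matrix.mul_assoc]
  rw [show M * Mᴴ = Φ M (fun x => x) from (Phi_id M).symm, Phi_mul]
  rw [show Φ M (fun x => ggf x * x) = Φ M Real.sqrt from Phi_congr M fun i => ?_]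
  · exact Phi_trace M _
  rcases (dd_nonneg M i).lt_or_eq with h | h
  · have hs : 0 < Real.sqrt (dd M i) := Real.sqrt_pos.mpr h
    have hd : dd M i = Real.sqrt (dd M i) * Real.sqrt (dd M i) :=
      (Real.mul_self_sqrt (dd_nonneg M i)).symm
    simp only [ggf, if_pos h]
    rw [hd]; field_simp
    rw [Real.sqrt_sq hs.le]
  · simp [ggf, ← h]

lemma trace_QQ_eef_QQ : (QQ M * Φ M eef * QQ M).trace = ((∑ i, Real.sqrt (dd M i) : ℝ) : ℂ) := by
  rw [Matrix.trace_mul_cycle, QQ_sq, PP, Phi_mul]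
  rw [show Φ M (fun x => Real.sqrt x * eef x) = Φ M Real.sqrt from Phi_congr M fun i => ?_]
  · exact Phi_trace M _
  rcases (dd_nonneg M i).lt_or_eq with h | h
  · simp [eef, if_pos h]
  · simp [eef, ← h]


lemma PP_trace : (PP M).trace = ((∑ i, Real.sqrt (dd M i) : ℝ) : ℂ) := Phi_trace M _

end RenyiAux

open RenyiAux


/-- **Lemma (Rényi-1 vs fidelity, two-sided bound)**: the one-point Rényi-1 correlator
`R = tr(√ρ O √ρ O†)` is a nonnegative real number with `F² ≤ R ≤ ‖O‖∞ F`. -/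
theorem renyi1_fidelity_sandwich
    {n : Type*} [Fintype n] [DecidableEq n]
    (ρ : Matrix n n ℂ) (hρ : ρ.PosSemidef) (hρtr : ρ.trace = 1)
    (O : Matrix n n ℂ) :
    (matSqrt ρ * O * matSqrt ρ * Oᴴ).trace.im = 0 ∧
    0 ≤ (matSqrt ρ * O * matSqrt ρ * Oᴴ).trace.re ∧
    fidelity ρ (O * ρ * Oᴴ) ^ 2 ≤ (matSqrt ρ * O * matSqrt ρ * Oᴴ).trace.re ∧
    (matSqrt ρ * O * matSqrt ρ * Oᴴ).trace.re ≤ opNorm O * fidelity ρ (O * ρ * Oᴴ) := by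
  classical
  obtain ⟨S, hS, hSS, hmsρ⟩ :
      ∃ S : Matrix n n ℂ, S.PosSemidef ∧ S * S = ρ ∧ matSqrt ρ = S :=
    ⟨hρ.sqrt, hρ.posSemidef_sqrt, hρ.sqrt_mul_self, dif_pos hρ⟩
  have hSH : Sᴴ = S := hS.1
  obtain ⟨T, hT, hTT⟩ : ∃ T : Matrix n n ℂ, T.PosSemidef ∧ T * T = S :=
    ⟨hS.sqrt, hS.posSemidef_sqrt, hS.sqrt_mul_self⟩
  have hTH : Tᴴ = T := hT.1
  set M : Matrix n n ℂ := S * O * S with hMdef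
  set N : Matrix n n ℂ := T * O * T with hNdef
  set F : ℝ := ∑ i, Real.sqrt (dd M i) with hFdef
  have hF0 : 0 ≤ F := Finset.sum_nonneg fun i _ => Real.sqrt_nonneg _
  -- the trace as tr(M Oᴴ)
  have htr : (matSqrt ρ * O * matSqrt ρ * Oᴴ).trace = (M * Oᴴ).trace := by rw [hmsρ]
  -- tr(M Oᴴ) = tr(Nᴴ N)
  have htrN : (M * Oᴴ).trace = (Nᴴ * N).trace := by
    have e1 : Nᴴ * N = T * (Oᴴ * S * O) * T := by
      rw [hNdef]; simp only [Matrix.conjTranspose_mul, hTH]; rw [← hTT]; noncomm_ring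
    have e2 : (Nᴴ * N).trace = ((Oᴴ * S * O) * S).trace := by
      rw [e1, Matrix.trace_mul_cycle, Matrix.trace_mul_comm, hTT]
    have e3 : (M * Oᴴ).trace = ((Oᴴ * S * O) * S).trace := by
      rw [Matrix.trace_mul_comm, hMdef]
      congr 1; noncomm_ring
    exact e3.trans e2.symm
  have hNpsd := Matrix.posSemidef_conjTranspose_mul_self N
  obtain ⟨hNtr, hNnn⟩ := RenyiAux.PosSemidef.trace_eq_re hNpsd
  have htrace_all : (matSqrt ρ * O * matSqrt ρ * Oᴴ).trace = (Nᴴ * N).trace := htr.trans htrN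
  have him : (matSqrt ρ * O * matSqrt ρ * Oᴴ).trace.im = 0 := by
    rw [htrace_all, hNtr]; exact Complex.ofReal_im _
  have hRe : (matSqrt ρ * O * matSqrt ρ * Oᴴ).trace.re = (Nᴴ * N).trace.re := by
    rw [htrace_all]
  have hR0 : 0 ≤ (matSqrt ρ * O * matSqrt ρ * Oᴴ).trace.re := hRe ▸ hNnn
  -- fidelity = F
  have hHHeq : S * (O * ρ * Oᴴ) * S = HH M := by
    show S * (O * ρ * Oᴴ) * S = M * Mᴴ
    rw [hMdef, ← hSS]; simp only [Matrix.conjTranspose_mul, hSH]; noncomm_ring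
  have hfid : fidelity ρ (O * ρ * Oᴴ) = F := by
    unfold fidelity
    rw [hmsρ, hHHeq]
    have hms2 : matSqrt (HH M) = PP M := by
      unfold matSqrt
      rw [dif_pos (hHH M)]
      exact (PP_eq_sqrt M).symm
    rw [hms2, PP_trace, hFdef]
    exact Complex.ofReal_re _
  -- trace of Vᴴ M is F
  have hVMtr : ((VV M)ᴴ * M).trace = (F : ℂ) := by rw [hFdef]; exact trace_VVH_M M
  have hVMN : ((VV M)ᴴ * M).trace = ((T * VV M * T)ᴴ * N).trace := by
    have e1 : (T * VV M * T)ᴴ * N = T * ((VV M)ᴴ * S * O) * T := by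
      rw [hNdef]; simp only [Matrix.conjTranspose_mul, hTH]; rw [← hTT]; noncomm_ring
    have e2 : ((T * VV M * T)ᴴ * N).trace = (((VV M)ᴴ * S * O) * S).trace := by
      rw [e1, Matrix.trace_mul_cycle, Matrix.trace_mul_comm, hTT]
    have e3 : (VV M)ᴴ * M = ((VV M)ᴴ * S * O) * S := by
      rw [hMdef]; noncomm_ring
    rw [e3, e2]
  -- bound a ≤ 1
  have ha1 : ((T * VV M * T)ᴴ * (T * VV M * T)).trace
      = ((S * VV M)ᴴ * (VV M * S)).trace := by
    have e1 : (T * VV M * T)ᴴ * (T * VV M * T) = T * ((VV M)ᴴ * S * VV M) * T := by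
      simp only [Matrix.conjTranspose_mul, hTH]; rw [← hTT]; noncomm_ring
    have e2 : (S * VV M)ᴴ * (VV M * S) = ((VV M)ᴴ * S * VV M) * S := by
      simp only [Matrix.conjTranspose_mul, hSH]; noncomm_ring
    rw [e1, e2, Matrix.trace_mul_cycle, Matrix.trace_mul_comm, hTT]
  have hb : ((S * VV M)ᴴ * (S * VV M)).trace.re ≤ 1 := by
    have e1 : (S * VV M)ᴴ * (S * VV M) = (VV M)ᴴ * ρ * VV M := by
      simp only [Matrix.conjTranspose_mul, hSH]; rw [← hSS]; noncomm_ring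
    have e2 : ((VV M)ᴴ * ρ * VV M).trace = (Φ M eef * ρ).trace := by
      rw [Matrix.trace_mul_cycle, VV_mul_conjTranspose]
    have h3 : (Φ M eef * ρ).trace.re + (Φ M (fun x => 1 - eef x) * ρ).trace.re = 1 := by
      rw [← Complex.add_re, ← Matrix.trace_add, ← Matrix.add_mul, Phi_eef_compl,
        Matrix.one_mul, hρtr]
      exact Complex.one_re
    have h4 : 0 ≤ (Φ M (fun x => 1 - eef x) * ρ).trace.re :=
      trace_mul_re_nonneg (Phi_one_sub_eef_psd M) hρ
    rw [e1, e2]; linarith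
  have hc : ((VV M * S)ᴴ * (VV M * S)).trace.re ≤ 1 := by
    have e1 : (VV M * S)ᴴ * (VV M * S) = S * ((VV M)ᴴ * VV M) * S := by
      simp only [Matrix.conjTranspose_mul, hSH]; noncomm_ring
    have e2 : (S * ((VV M)ᴴ * VV M) * S).trace = (ρ * ((VV M)ᴴ * VV M)).trace := by
      rw [Matrix.trace_mul_cycle, hSS]
    have hK : ((VV M)ᴴ * VV M).PosSemidef := Matrix.posSemidef_conjTranspose_mul_self _
    have h1K : (1 - (VV M)ᴴ * VV M).PosSemidef := by
      have h5 : (1 - (VV M)ᴴ * VV M)ᴴ * (1 - (VV M)ᴴ * VV M) = 1 - (VV M)ᴴ * VV M := by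
        rw [Matrix.conjTranspose_sub, Matrix.conjTranspose_one, hK.1]
        calc (1 - (VV M)ᴴ * VV M) * (1 - (VV M)ᴴ * VV M)
            = 1 - (VV M)ᴴ * VV M - (VV M)ᴴ * VV M
              + ((VV M)ᴴ * VV M) * ((VV M)ᴴ * VV M) := by noncomm_ring
          _ = 1 - (VV M)ᴴ * VV M := by rw [KK_idem]; abel
      rw [← h5]; exact Matrix.posSemidef_conjTranspose_mul_self _
    have h3 : (ρ * ((VV M)ᴴ * VV M)).trace.re + (ρ * (1 - (VV M)ᴴ * VV M)).trace.re = 1 := by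
      rw [← Complex.add_re, ← Matrix.trace_add, ← Matrix.mul_add,
        show (VV M)ᴴ * VV M + (1 - (VV M)ᴴ * VV M) = 1 by abel, Matrix.mul_one, hρtr]
      exact Complex.one_re
    have h4 := trace_mul_re_nonneg hρ h1K
    rw [e1, e2]; linarith
  have ha2 : ((T * VV M * T)ᴴ * (T * VV M * T)).trace.re ≤ 1 := by
    rw [ha1]
    have hacs := RenyiAux.cs (S * VV M) (VV M * S)
    have hbn := trace_conjTranspose_mul_self_re_nonneg (S * VV M)
    have hcn := trace_conjTranspose_mul_self_re_nonneg (VV M * S)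
    set z := ((S * VV M)ᴴ * (VV M * S)).trace with hzdef
    have h6 : ‖z‖ ≤ 1 := by nlinarith [norm_nonneg z]
    calc z.re ≤ ‖z‖ := Complex.re_le_norm z
      _ = ‖z‖ := rfl
      _ ≤ 1 := h6
  -- lower bound
  have hlow : F ^ 2 ≤ (Nᴴ * N).trace.re := by
    have hcs1 := RenyiAux.cs (T * VV M * T) N
    have hFn : ‖((T * VV M * T)ᴴ * N).trace‖ = F := by
      rw [← hVMN, hVMtr, Complex.norm_real, Real.norm_eq_abs, abs_of_nonneg hF0]
    calc F ^ 2 = ‖((T * VV M * T)ᴴ * N).trace‖ ^ 2 := by rw [hFn]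
      _ ≤ ((T * VV M * T)ᴴ * (T * VV M * T)).trace.re * (Nᴴ * N).trace.re := hcs1
      _ ≤ 1 * (Nᴴ * N).trace.re := mul_le_mul_of_nonneg_right ha2 hNnn
      _ = (Nᴴ * N).trace.re := one_mul _
  -- upper bound
  have hMOdec : M * Oᴴ = (QQ M)ᴴ * (QQ M * VV M * Oᴴ) := by
    rw [QQ_herm]
    calc M * Oᴴ = (PP M * VV M) * Oᴴ := by rw [PV_eq_M]
      _ = ((QQ M * QQ M) * VV M) * Oᴴ := by rw [QQ_sq]
      _ = QQ M * (QQ M * VV M * Oᴴ) := by noncomm_ring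
  have hQ2 : ((QQ M)ᴴ * QQ M).trace.re = F := by
    rw [QQ_herm, QQ_sq, PP_trace, hFdef]
    exact Complex.ofReal_re _
  have hY : ((QQ M * VV M * Oᴴ)ᴴ * (QQ M * VV M * Oᴴ)).trace.re ≤ opNorm O ^ 2 * F := by
    have e1 : ((QQ M * VV M * Oᴴ)ᴴ * (QQ M * VV M * Oᴴ)).trace
        = ((QQ M * VV M) * (Oᴴ * O) * (QQ M * VV M)ᴴ).trace := by
      rw [Matrix.trace_mul_comm]
      congr 1
      simp only [Matrix.conjTranspose_mul, Matrix.conjTranspose_conjTranspose]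
      noncomm_ring
    have e2 := RenyiAux.trace_opNorm_bound O (QQ M * VV M)
    have e3 : ((QQ M * VV M) * (QQ M * VV M)ᴴ).trace = (F : ℂ) := by
      have e4 : (QQ M * VV M) * (QQ M * VV M)ᴴ = QQ M * (VV M * (VV M)ᴴ) * QQ M := by
        simp only [Matrix.conjTranspose_mul, QQ_herm]; noncomm_ring
      rw [e4, VV_mul_conjTranspose, hFdef]
      exact trace_QQ_eef_QQ M
    calc ((QQ M * VV M * Oᴴ)ᴴ * (QQ M * VV M * Oᴴ)).trace.re
        = ((QQ M * VV M) * (Oᴴ * O) * (QQ M * VV M)ᴴ).trace.re := by rw [e1]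
      _ ≤ opNorm O ^ 2 * ((QQ M * VV M) * (QQ M * VV M)ᴴ).trace.re := e2
      _ = opNorm O ^ 2 * F := by rw [e3, Complex.ofReal_re]
  have hnormbound : ‖(M * Oᴴ).trace‖ ^ 2 ≤ (opNorm O * F) ^ 2 := by
    have hYn := trace_conjTranspose_mul_self_re_nonneg (QQ M * VV M * Oᴴ)
    calc ‖(M * Oᴴ).trace‖ ^ 2 = ‖((QQ M)ᴴ * (QQ M * VV M * Oᴴ)).trace‖ ^ 2 := by rw [hMOdec]
      _ ≤ ((QQ M)ᴴ * QQ M).trace.re * ((QQ M * VV M * Oᴴ)ᴴ * (QQ M * VV M * Oᴴ)).trace.re :=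
          RenyiAux.cs _ _
      _ ≤ F * (opNorm O ^ 2 * F) := by
          rw [hQ2]
          exact mul_le_mul_of_nonneg_left hY hF0
      _ = (opNorm O * F) ^ 2 := by ring
  have hup : (matSqrt ρ * O * matSqrt ρ * Oᴴ).trace.re ≤ opNorm O * F := by
    have h7 : (matSqrt ρ * O * matSqrt ρ * Oᴴ).trace.re ≤ ‖(M * Oᴴ).trace‖ := by
      rw [htr]
      calc (M * Oᴴ).trace.re ≤ ‖(M * Oᴴ).trace‖ := Complex.re_le_norm _
        _ = ‖(M * Oᴴ).trace‖ := rfl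
    have h9 : 0 ≤ opNorm O * F := mul_nonneg (norm_nonneg _) hF0
    nlinarith [norm_nonneg ((M * Oᴴ).trace)]
  refine ⟨him, hR0, ?_, ?_⟩
  · rw [hfid, hRe]; exact hlow
  · rw [hfid]; exact hup
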